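/- Let X be an absolutely continuous real random variable with finite second moment satisfying the symmetry (a − X) =_d X for some a ∈ ℝ. Let γ₊ = L(X,X) and γ₋ = L(X, a−X). Then over all couplings γ of L(X) with itself (laws of pairs (X,Y) with Y =_d X), the quadratic Wasserstein distance to the diagonal is maximized by the antithetic coupling: sup_{γ ∈ Γ(X,X)} W₂(γ, γ₊) = W₂(γ₋, γ₊). -/

import Mathlib

open MeasureTheory ProbabilityTheory

/-- The Wasserstein distance of order `p` with ground cost `d`, defined as the infimum
over couplings of `P` and `Q` of the `p`-th root of the expected `p`-th power cost. -/
noncomputable def Wass {α : Type*} [MeasurableSpace α]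
    (d : α → α → ℝ) (p : ℝ) (P Q : Measure α) : ℝ :=
  sInf ((fun γ : Measure (α × α) => (∫ z, d z.1 z.2 ^ p ∂γ) ^ (1 / p)) ''
    {γ | γ.map Prod.fst = P ∧ γ.map Prod.snd = Q})

lemma integrable_comp_fst' {α β : Type*} [MeasurableSpace α] [MeasurableSpace β]
    {ρ : Measure (α × β)} {f : α → ℝ} (h : Integrable f (ρ.map Prod.fst)) :
    Integrable (fun z : α × β => f z.1) ρ :=
  (integrable_map_measure h.1 measurable_fst.aemeasurable).mp h

lemma integrable_comp_snd' {α β : Type*} [MeasurableSpace α] [MeasurableSpace β]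
    {ρ : Measure (α × β)} {f : β → ℝ} (h : Integrable f (ρ.map Prod.snd)) :
    Integrable (fun z : α × β => f z.2) ρ :=
  (integrable_map_measure h.1 measurable_snd.aemeasurable).mp h

lemma integral_comp_fst' {α β : Type*} [MeasurableSpace α] [MeasurableSpace β]
    (ρ : Measure (α × β)) {f : α → ℝ} (hf : AEStronglyMeasurable f (ρ.map Prod.fst)) :
    ∫ z, f z.1 ∂ρ = ∫ x, f x ∂(ρ.map Prod.fst) :=
  (integral_map measurable_fst.aemeasurable hf).symm

lemma integral_comp_snd' {α β : Type*} [MeasurableSpace α] [MeasurableSpace β]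
    (ρ : Measure (α × β)) {f : β → ℝ} (hf : AEStronglyMeasurable f (ρ.map Prod.snd)) :
    ∫ z, f z.2 ∂ρ = ∫ x, f x ∂(ρ.map Prod.snd) :=
  (integral_map measurable_snd.aemeasurable hf).symm

lemma indep_coupling (ν : Measure ℝ) [IsProbabilityMeasure ν]
    (hν1 : Integrable (fun x => x) ν) (hν2 : Integrable (fun x => x ^ 2) ν)
    (γ : Measure (ℝ × ℝ)) (hf : γ.map Prod.fst = ν) (hs : γ.map Prod.snd = ν) :
    ∃ π : Measure ((ℝ × ℝ) × (ℝ × ℝ)), π.map Prod.fst = γ ∧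
      π.map Prod.snd = ν.map (fun x => (x, x)) ∧
      ∫ z, ((z.1.1 - z.2.1) ^ 2 + (z.1.2 - z.2.2) ^ 2) ∂π
        = 4 * (∫ x, x ^ 2 ∂ν) - 4 * (∫ x, x ∂ν) ^ 2 := by
  haveI hγP : IsProbabilityMeasure γ := by
    constructor
    have := congrArg (fun m : Measure ℝ => m Set.univ) hf
    simp only [Measure.map_apply measurable_fst MeasurableSet.univ, Set.preimage_univ] at this
    rw [this, measure_univ]
  have he : Measurable (fun p : (ℝ × ℝ) × ℝ => (p.1, (p.2, p.2))) :=
    measurable_fst.prodMk (measurable_snd.prodMk measurable_snd)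
  refine ⟨(γ.prod ν).map (fun p => (p.1, (p.2, p.2))), ?_, ?_, ?_⟩
  · rw [Measure.map_map measurable_fst he]
    have h1 : (Prod.fst ∘ fun p : (ℝ × ℝ) × ℝ => (p.1, (p.2, p.2))) = Prod.fst := rfl
    rw [h1, Measure.map_fst_prod, measure_univ, one_smul]
  · rw [Measure.map_map measurable_snd he]
    have h1 : (Prod.snd ∘ fun p : (ℝ × ℝ) × ℝ => (p.1, (p.2, p.2)))
        = (fun x : ℝ => (x, x)) ∘ Prod.snd := rfl
    rw [h1, ← Measure.map_map (show Measurable fun x : ℝ => (x, x) from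
        measurable_id.prodMk measurable_id) measurable_snd,
      Measure.map_snd_prod, measure_univ, one_smul]
  · rw [integral_map he.aemeasurable ((show Measurable fun z : (ℝ×ℝ)×(ℝ×ℝ) => (z.1.1 - z.2.1) ^ 2 + (z.1.2 - z.2.2) ^ 2 by fun_prop).aestronglyMeasurable)]
    have key : (fun p : (ℝ × ℝ) × ℝ =>
          (((p.1, (p.2, p.2)) : (ℝ × ℝ) × (ℝ × ℝ)).1.1 - ((p.1, (p.2, p.2)) : (ℝ × ℝ) × (ℝ × ℝ)).2.1) ^ 2
            + (((p.1, (p.2, p.2)) : (ℝ × ℝ) × (ℝ × ℝ)).1.2 - ((p.1, (p.2, p.2)) : (ℝ × ℝ) × (ℝ × ℝ)).2.2) ^ 2)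
        = fun p : (ℝ × ℝ) × ℝ =>
          ((p.1.1 ^ 2 + p.1.2 ^ 2) + 2 * p.2 ^ 2) + (-(2 * (p.1.1 + p.1.2))) * p.2 := by
      funext p; ring
    rw [key]
    have ia : Integrable (fun z : ℝ × ℝ => z.1 ^ 2) γ :=
      integrable_comp_fst' (by rw [hf]; exact hν2)
    have ib : Integrable (fun z : ℝ × ℝ => z.2 ^ 2) γ :=
      integrable_comp_snd' (by rw [hs]; exact hν2)
    have i1 : Integrable (fun z : ℝ × ℝ => z.1 ^ 2 + z.2 ^ 2) γ := ia.add ib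
    have iA : Integrable (fun p : (ℝ × ℝ) × ℝ => p.1.1 ^ 2 + p.1.2 ^ 2) (γ.prod ν) :=
      integrable_comp_fst' (f := fun z : ℝ × ℝ => z.1 ^ 2 + z.2 ^ 2)
        (by rw [Measure.map_fst_prod, measure_univ, one_smul]; exact i1)
    have iB : Integrable (fun p : (ℝ × ℝ) × ℝ => 2 * p.2 ^ 2) (γ.prod ν) :=
      integrable_comp_snd' (f := fun x : ℝ => 2 * x ^ 2)
        (by rw [Measure.map_snd_prod, measure_univ, one_smul]; exact hν2.const_mul 2)
    have ig1 : Integrable (fun z : ℝ × ℝ => z.1) γ :=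
      integrable_comp_fst' (f := fun x : ℝ => x) (by rwa [hf])
    have ig2 : Integrable (fun z : ℝ × ℝ => z.2) γ :=
      integrable_comp_snd' (f := fun x : ℝ => x) (by rwa [hs])
    have isum : Integrable (fun z : ℝ × ℝ => -(2 * (z.1 + z.2))) γ :=
      (((ig1.add ig2).const_mul 2).neg)
    have iC : Integrable (fun p : (ℝ × ℝ) × ℝ => (-(2 * (p.1.1 + p.1.2))) * p.2) (γ.prod ν) :=
      isum.mul_prod hν1
    have iAB : Integrable (fun p : (ℝ × ℝ) × ℝ => (p.1.1 ^ 2 + p.1.2 ^ 2) + 2 * p.2 ^ 2)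
        (γ.prod ν) := iA.add iB
    rw [integral_add iAB iC, integral_add iA iB]
    have eC : ∫ p : (ℝ × ℝ) × ℝ, (-(2 * (p.1.1 + p.1.2))) * p.2 ∂(γ.prod ν)
        = (∫ z : ℝ × ℝ, -(2 * (z.1 + z.2)) ∂γ) * ∫ x, x ∂ν := integral_prod_mul (fun z : ℝ × ℝ => -(2 * (z.1 + z.2))) (fun x : ℝ => x)
    have eA : ∫ p : (ℝ × ℝ) × ℝ, (p.1.1 ^ 2 + p.1.2 ^ 2) ∂(γ.prod ν)
        = ∫ z : ℝ × ℝ, (z.1 ^ 2 + z.2 ^ 2) ∂γ := by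
      rw [integral_comp_fst' (γ.prod ν) (f := fun z : ℝ × ℝ => z.1 ^ 2 + z.2 ^ 2)
        (by rw [Measure.map_fst_prod, measure_univ, one_smul]; exact i1.1),
        Measure.map_fst_prod, measure_univ, one_smul]
    have eB : ∫ p : (ℝ × ℝ) × ℝ, 2 * p.2 ^ 2 ∂(γ.prod ν) = 2 * ∫ x, x ^ 2 ∂ν := by
      rw [integral_comp_snd' (γ.prod ν) (f := fun x : ℝ => 2 * x ^ 2)
        (by rw [Measure.map_snd_prod, measure_univ, one_smul]; exact (hν2.const_mul 2).1),
        Measure.map_snd_prod, measure_univ, one_smul, integral_const_mul]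
    have m2a : ∫ z : ℝ × ℝ, z.1 ^ 2 ∂γ = ∫ x, x ^ 2 ∂ν := by
      rw [integral_comp_fst' γ (f := fun x : ℝ => x ^ 2) (by rw [hf]; exact hν2.1), hf]
    have m2b : ∫ z : ℝ × ℝ, z.2 ^ 2 ∂γ = ∫ x, x ^ 2 ∂ν := by
      rw [integral_comp_snd' γ (f := fun x : ℝ => x ^ 2) (by rw [hs]; exact hν2.1), hs]
    have m1a : ∫ z : ℝ × ℝ, z.1 ∂γ = ∫ x, x ∂ν := by
      rw [integral_comp_fst' γ (f := fun x : ℝ => x) (by rw [hf]; exact hν1.1), hf]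
    have m1b : ∫ z : ℝ × ℝ, z.2 ∂γ = ∫ x, x ∂ν := by
      rw [integral_comp_snd' γ (f := fun x : ℝ => x) (by rw [hs]; exact hν1.1), hs]
    have eA2 : ∫ z : ℝ × ℝ, (z.1 ^ 2 + z.2 ^ 2) ∂γ = 2 * ∫ x, x ^ 2 ∂ν := by
      rw [integral_add ia ib, m2a, m2b]; ring
    have eS : ∫ z : ℝ × ℝ, -(2 * (z.1 + z.2)) ∂γ = -(4 * ∫ x, x ∂ν) := by
      rw [integral_neg, integral_const_mul, integral_add ig1 ig2, m1a, m1b]; ring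
    rw [eC, eA, eB, eA2, eS]; ring

lemma exact_cost (π : Measure ((ℝ × ℝ) × (ℝ × ℝ))) (γm γp : Measure (ℝ × ℝ)) (a : ℝ)
    (hfst : π.map Prod.fst = γm) (hsnd : π.map Prod.snd = γp)
    (ham : ∀ᵐ w ∂γm, w.1 + w.2 = a) (hap : ∀ᵐ w ∂γp, w.1 = w.2)
    (him : Integrable (fun w : ℝ × ℝ => w.1 ^ 2 + w.2 ^ 2) γm)
    (hip : Integrable (fun w : ℝ × ℝ => w.1 ^ 2 + w.2 ^ 2 - a * (w.1 + w.2)) γp) :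
    ∫ z, ((z.1.1 - z.2.1) ^ 2 + (z.1.2 - z.2.2) ^ 2) ∂π
      = (∫ w : ℝ × ℝ, (w.1 ^ 2 + w.2 ^ 2) ∂γm)
        + ∫ w : ℝ × ℝ, (w.1 ^ 2 + w.2 ^ 2 - a * (w.1 + w.2)) ∂γp := by
  have h1 : ∀ᵐ z ∂π, z.1.1 + z.1.2 = a := by
    rw [← hfst] at ham
    exact ae_of_ae_map measurable_fst.aemeasurable ham
  have h2 : ∀ᵐ z ∂π, z.2.1 = z.2.2 := by
    rw [← hsnd] at hap
    exact ae_of_ae_map measurable_snd.aemeasurable hap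
  have hcong : (fun z : (ℝ × ℝ) × (ℝ × ℝ) => (z.1.1 - z.2.1) ^ 2 + (z.1.2 - z.2.2) ^ 2)
      =ᵐ[π] fun z => (z.1.1 ^ 2 + z.1.2 ^ 2) + (z.2.1 ^ 2 + z.2.2 ^ 2 - a * (z.2.1 + z.2.2)) := by
    filter_upwards [h1, h2] with z e1 e2
    linear_combination (-(z.2.1 + z.2.2)) * e1 + (z.1.2 - z.1.1) * e2
  rw [integral_congr_ae hcong]
  have if1 : Integrable (fun z : (ℝ × ℝ) × (ℝ × ℝ) => z.1.1 ^ 2 + z.1.2 ^ 2) π :=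
    integrable_comp_fst' (f := fun w : ℝ × ℝ => w.1 ^ 2 + w.2 ^ 2) (by rwa [hfst])
  have if2 : Integrable (fun z : (ℝ × ℝ) × (ℝ × ℝ) =>
      z.2.1 ^ 2 + z.2.2 ^ 2 - a * (z.2.1 + z.2.2)) π :=
    integrable_comp_snd' (f := fun w : ℝ × ℝ => w.1 ^ 2 + w.2 ^ 2 - a * (w.1 + w.2))
      (by rwa [hsnd])
  rw [integral_add if1 if2,
    integral_comp_fst' π (f := fun w : ℝ × ℝ => w.1 ^ 2 + w.2 ^ 2) (by rw [hfst]; exact him.1),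
    integral_comp_snd' π (f := fun w : ℝ × ℝ => w.1 ^ 2 + w.2 ^ 2 - a * (w.1 + w.2))
      (by rw [hsnd]; exact hip.1), hfst, hsnd]

theorem stmt16 {Ω : Type*} [MeasurableSpace Ω]
    (μ : Measure Ω) [IsProbabilityMeasure μ]
    (X : Ω → ℝ) (hX : Measurable X)
    (habs : μ.map X ≪ volume) (hm : MemLp X 2 μ)
    (a : ℝ) (hsym : μ.map (fun ω => a - X ω) = μ.map X) :
    sSup ((fun γ : Measure (ℝ × ℝ) =>
        Wass (fun z z' : ℝ × ℝ => Real.sqrt ((z.1 - z'.1) ^ 2 + (z.2 - z'.2) ^ 2)) 2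
          γ (μ.map (fun ω => (X ω, X ω)))) ''
      {γ : Measure (ℝ × ℝ) | γ.map Prod.fst = μ.map X ∧ γ.map Prod.snd = μ.map X})
      = Wass (fun z z' : ℝ × ℝ => Real.sqrt ((z.1 - z'.1) ^ 2 + (z.2 - z'.2) ^ 2)) 2
          (μ.map (fun ω => (X ω, a - X ω))) (μ.map (fun ω => (X ω, X ω))) := by
  set d : ℝ × ℝ → ℝ × ℝ → ℝ :=
    fun z z' => Real.sqrt ((z.1 - z'.1) ^ 2 + (z.2 - z'.2) ^ 2) with hd
  set ν : Measure ℝ := μ.map X with hν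
  set γp : Measure (ℝ × ℝ) := μ.map (fun ω => (X ω, X ω)) with hγpdef
  set γm : Measure (ℝ × ℝ) := μ.map (fun ω => (X ω, a - X ω)) with hγmdef
  haveI : IsProbabilityMeasure ν := Measure.isProbabilityMeasure_map hX.aemeasurable
  have hmX : Measurable fun ω => (X ω, a - X ω) := hX.prodMk (measurable_const.sub hX)
  have hmXX : Measurable fun ω => (X ω, X ω) := hX.prodMk hX
  -- integrabilities
  have hX2 : Integrable (fun ω => X ω ^ 2) μ :=
    (memLp_two_iff_integrable_sq hX.aestronglyMeasurable).mp hm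
  have hX1 : Integrable X μ := hm.integrable one_le_two
  have hν2 : Integrable (fun x => x ^ 2) ν :=
    (integrable_map_measure (by fun_prop) hX.aemeasurable).mpr hX2
  have hν1 : Integrable (fun x => x) ν :=
    (integrable_map_measure measurable_id.aestronglyMeasurable hX.aemeasurable).mpr hX1
  set M2 : ℝ := ∫ x, x ^ 2 ∂ν with hM2
  set M1 : ℝ := ∫ x, x ∂ν with hM1
  have hM2μ : M2 = ∫ ω, X ω ^ 2 ∂μ := integral_map hX.aemeasurable (by fun_prop)
  have hM1μ : M1 = ∫ ω, X ω ∂μ :=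
    integral_map (f := fun x : ℝ => x) hX.aemeasurable measurable_id.aestronglyMeasurable
  -- a = 2 * M1
  have ha : a = 2 * M1 := by
    have h := congrArg (fun m : Measure ℝ => ∫ x, x ∂m) hsym
    rw [integral_map (φ := fun ω => a - X ω) (f := fun x : ℝ => x) (measurable_const.sub hX).aemeasurable
        measurable_id.aestronglyMeasurable] at h
    rw [integral_sub (integrable_const a) hX1, integral_const] at h
    simp only [probReal_univ, ENNReal.toReal_one, smul_eq_mul, one_mul] at h
    rw [← hM1μ] at h
    linarith [h]
  -- identifications of the two special measures
  have hγp' : γp = ν.map (fun x => (x, x)) := by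
    rw [hν, Measure.map_map (show Measurable fun x : ℝ => (x, x) from
      measurable_id.prodMk measurable_id) hX]
    rfl
  have hγm1 : γm.map Prod.fst = ν := by
    rw [hγmdef, Measure.map_map measurable_fst hmX]; rfl
  have hγm2 : γm.map Prod.snd = ν := by
    rw [hγmdef, Measure.map_map measurable_snd hmX]; exact hsym
  -- a.e. structure of the supports
  have hae_m : ∀ᵐ w ∂γm, w.1 + w.2 = a := by
    rw [hγmdef]
    refine (MeasureTheory.ae_map_iff hmX.aemeasurable
      (measurableSet_eq_fun (measurable_fst.add measurable_snd) measurable_const)).mpr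
      (Filter.Eventually.of_forall fun ω => ?_)
    show X ω + (a - X ω) = a
    ring
  have hae_p : ∀ᵐ w ∂γp, w.1 = w.2 := by
    rw [hγpdef]
    refine (MeasureTheory.ae_map_iff hmXX.aemeasurable
      (measurableSet_eq_fun measurable_fst measurable_snd)).mpr
      (Filter.Eventually.of_forall fun ω => rfl)
  -- integrabilities on the special measures
  have hmq : Measurable fun w : ℝ × ℝ => w.1 ^ 2 + w.2 ^ 2 := by fun_prop
  have hmq2 : Measurable fun w : ℝ × ℝ => w.1 ^ 2 + w.2 ^ 2 - a * (w.1 + w.2) := by fun_prop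
  have haX2 : Integrable (fun ω => (a - X ω) ^ 2) μ :=
    (memLp_two_iff_integrable_sq (aestronglyMeasurable_const.sub hX.aestronglyMeasurable)).mp
      ((memLp_const a).sub hm)
  have him : Integrable (fun w : ℝ × ℝ => w.1 ^ 2 + w.2 ^ 2) γm := by
    rw [hγmdef]
    exact (integrable_map_measure hmq.aestronglyMeasurable hmX.aemeasurable).mpr (hX2.add haX2)
  have hip : Integrable (fun w : ℝ × ℝ => w.1 ^ 2 + w.2 ^ 2 - a * (w.1 + w.2)) γp := by
    rw [hγpdef]
    exact (integrable_map_measure hmq2.aestronglyMeasurable hmXX.aemeasurable).mpr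
      ((hX2.add hX2).sub ((hX1.add hX1).const_mul a))
  -- the total cost of ANY coupling of γm with γp
  have hEm : ∫ w : ℝ × ℝ, (w.1 ^ 2 + w.2 ^ 2) ∂γm
      = ∫ ω, (X ω ^ 2 + (a - X ω) ^ 2) ∂μ := by
    rw [hγmdef]; exact integral_map hmX.aemeasurable hmq.aestronglyMeasurable
  have hEp : ∫ w : ℝ × ℝ, (w.1 ^ 2 + w.2 ^ 2 - a * (w.1 + w.2)) ∂γp
      = ∫ ω, (X ω ^ 2 + X ω ^ 2 - a * (X ω + X ω)) ∂μ := by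
    rw [hγpdef]; exact integral_map hmXX.aemeasurable hmq2.aestronglyMeasurable
  have iA2 : Integrable (fun ω => 2 * X ω ^ 2) μ := hX2.const_mul 2
  have iA1 : Integrable (fun ω => 2 * a * X ω) μ := hX1.const_mul (2 * a)
  have i12 : Integrable (fun ω => 2 * X ω ^ 2 - 2 * a * X ω) μ := iA2.sub iA1
  have e1 : ∫ ω, (X ω ^ 2 + (a - X ω) ^ 2) ∂μ
      = 2 * (∫ ω, X ω ^ 2 ∂μ) - 2 * a * (∫ ω, X ω ∂μ) + a ^ 2 := by
    rw [show (fun ω => X ω ^ 2 + (a - X ω) ^ 2)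
        = fun ω => (2 * X ω ^ 2 - 2 * a * X ω) + a ^ 2 from by funext ω; ring,
      integral_add i12 (integrable_const _),
      integral_sub iA2 iA1, integral_const_mul,
      integral_const_mul, integral_const]
    simp [measure_univ]
  have e2 : ∫ ω, (X ω ^ 2 + X ω ^ 2 - a * (X ω + X ω)) ∂μ
      = 2 * (∫ ω, X ω ^ 2 ∂μ) - 2 * a * (∫ ω, X ω ∂μ) := by
    rw [show (fun ω => X ω ^ 2 + X ω ^ 2 - a * (X ω + X ω))
        = fun ω => 2 * X ω ^ 2 - 2 * a * X ω from by funext ω; ring,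
      integral_sub iA2 iA1, integral_const_mul,
      integral_const_mul]
  have hC : (∫ w : ℝ × ℝ, (w.1 ^ 2 + w.2 ^ 2) ∂γm)
      + (∫ w : ℝ × ℝ, (w.1 ^ 2 + w.2 ^ 2 - a * (w.1 + w.2)) ∂γp)
      = 4 * M2 - 4 * M1 ^ 2 := by
    rw [hEm, hEp, e1, e2, ← hM2μ, ← hM1μ, ha]; ring
  -- the cost function raised to the power two
  have hd2 : ∀ z : (ℝ × ℝ) × (ℝ × ℝ),
      d z.1 z.2 ^ (2 : ℝ) = (z.1.1 - z.2.1) ^ 2 + (z.1.2 - z.2.2) ^ 2 := by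
    intro z
    simp only [hd]
    rw [show ((2 : ℝ)) = ((2 : ℕ) : ℝ) from by norm_num, Real.rpow_natCast,
      Real.sq_sqrt (by positivity)]
  have hpow : ∀ π : Measure ((ℝ × ℝ) × (ℝ × ℝ)),
      (∫ z, d z.1 z.2 ^ (2 : ℝ) ∂π) = ∫ z, ((z.1.1 - z.2.1) ^ 2 + (z.1.2 - z.2.2) ^ 2) ∂π :=
    fun π => integral_congr_ae (Filter.Eventually.of_forall fun z => hd2 z)
  -- Wasserstein distance from γm to γp
  have hWm : Wass d 2 γm γp = (4 * M2 - 4 * M1 ^ 2) ^ (1 / (2 : ℝ)) := by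
    have himg : (fun π : Measure ((ℝ × ℝ) × (ℝ × ℝ)) =>
          (∫ z, d z.1 z.2 ^ (2 : ℝ) ∂π) ^ (1 / (2 : ℝ))) ''
        {π | π.map Prod.fst = γm ∧ π.map Prod.snd = γp}
        = {(4 * M2 - 4 * M1 ^ 2) ^ (1 / (2 : ℝ))} := by
      apply Set.eq_singleton_iff_unique_mem.mpr
      constructor
      · obtain ⟨π₀, h1, h2, h3⟩ := indep_coupling ν hν1 hν2 γm hγm1 hγm2
        refine ⟨π₀, ⟨h1, by rw [h2, ← hγp']⟩, ?_⟩
        show (∫ z, d z.1 z.2 ^ (2 : ℝ) ∂π₀) ^ (1 / (2 : ℝ)) = _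
        rw [hpow π₀, h3]
      · rintro x ⟨π, ⟨hf', hs'⟩, rfl⟩
        show (∫ z, d z.1 z.2 ^ (2 : ℝ) ∂π) ^ (1 / (2 : ℝ)) = _
        rw [hpow π, exact_cost π γm γp a hf' hs' hae_m hae_p him hip, hC]
    show sInf _ = _
    rw [himg, csInf_singleton]
  -- upper bound for every coupling γ
  have hub : ∀ γ : Measure (ℝ × ℝ), γ.map Prod.fst = ν → γ.map Prod.snd = ν →
      Wass d 2 γ γp ≤ (4 * M2 - 4 * M1 ^ 2) ^ (1 / (2 : ℝ)) := by
    intro γ h1 h2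
    obtain ⟨π₀, hp1, hp2, hp3⟩ := indep_coupling ν hν1 hν2 γ h1 h2
    have hmem : (∫ z, d z.1 z.2 ^ (2 : ℝ) ∂π₀) ^ (1 / (2 : ℝ)) ∈
        (fun π : Measure ((ℝ × ℝ) × (ℝ × ℝ)) =>
          (∫ z, d z.1 z.2 ^ (2 : ℝ) ∂π) ^ (1 / (2 : ℝ))) ''
        {π | π.map Prod.fst = γ ∧ π.map Prod.snd = γp} :=
      ⟨π₀, ⟨hp1, by rw [hp2, ← hγp']⟩, rfl⟩
    have hbdd : BddBelow ((fun π : Measure ((ℝ × ℝ) × (ℝ × ℝ)) =>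
        (∫ z, d z.1 z.2 ^ (2 : ℝ) ∂π) ^ (1 / (2 : ℝ))) ''
        {π | π.map Prod.fst = γ ∧ π.map Prod.snd = γp}) := by
      refine ⟨0, ?_⟩
      rintro x ⟨π, -, rfl⟩
      refine Real.rpow_nonneg (integral_nonneg fun z => ?_) _
      refine Real.rpow_nonneg ?_ _
      simp only [hd]
      exact Real.sqrt_nonneg _
    calc Wass d 2 γ γp ≤ (∫ z, d z.1 z.2 ^ (2 : ℝ) ∂π₀) ^ (1 / (2 : ℝ)) := csInf_le hbdd hmem
      _ = (4 * M2 - 4 * M1 ^ 2) ^ (1 / (2 : ℝ)) := by rw [hpow π₀, hp3]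
  -- conclusion
  have hgr : IsGreatest ((fun γ : Measure (ℝ × ℝ) => Wass d 2 γ γp) ''
      {γ : Measure (ℝ × ℝ) | γ.map Prod.fst = ν ∧ γ.map Prod.snd = ν}) (Wass d 2 γm γp) := by
    constructor
    · exact ⟨γm, ⟨hγm1, hγm2⟩, rfl⟩
    · rintro x ⟨γ, ⟨h1', h2'⟩, rfl⟩
      rw [hWm]
      exact hub γ h1' h2'
  exact hgr.csSup_eq
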